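/- For every odd positive integer p and every finite simple graph G, the chromatic number of the exact distance-p graph of G is at most the weak (2p−1)-colouring number of G, i.e. χ(G^[♮p]) ≤ wcol_{2p−1}(G). -/

import Mathlib

open SimpleGraph

variable {V : Type*}

/-- The exact distance-`p` graph: distinct vertices adjacent iff their distance in `G` is exactly `p`. -/
def exactDistanceGraph (G : SimpleGraph V) (p : ℕ) : SimpleGraph V where
  Adj x y := x ≠ y ∧ G.Reachable x y ∧ G.dist x y = p
  symm := by
    constructor
    rintro x y ⟨h1, h2, h3⟩
    exact ⟨h1.symm, h2.symm, by rwa [SimpleGraph.dist_comm]⟩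
  loopless := by constructor; rintro x ⟨h1, -, -⟩; exact h1 rfl

/-- `x` is weakly `k`-accessible from `y` w.r.t. the linear order `L`. -/
def WeaklyAccessible (G : SimpleGraph V) (L : LinearOrder V) (k : ℕ) (x y : V) : Prop :=
  L.lt x y ∧ ∃ w : G.Walk x y, w.IsPath ∧ w.length ≤ k ∧
    ∀ z ∈ w.support, z ≠ x → z ≠ y → L.lt x z

/-- The weak `k`-colouring number. -/
noncomputable def wcol (G : SimpleGraph V) (k : ℕ) : ℕ :=
  1 + sInf { m : ℕ | ∃ L : LinearOrder V, ∀ y : V,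
      {x : V | WeaklyAccessible G L k x y}.ncard ≤ m }

section Greedy

variable [Fintype V]

/-- Greedy colouring along `L` avoiding the colours of all weakly `k`-accessible vertices. -/
private noncomputable def greedy (G : SimpleGraph V) (L : LinearOrder V) (k : ℕ) : V → ℕ :=
  haveI : IsTrans V L.lt := letI := L; inferInstanceAs (IsTrans V (· < ·))
  haveI : IsIrrefl V L.lt := letI := L; inferInstanceAs (IsIrrefl V (· < ·))
  WellFounded.fix (Finite.wellFounded_of_trans_of_irrefl L.lt)
    (fun v rec => sInf {n | ∀ x (hx : L.lt x v), WeaklyAccessible G L k x v → rec x hx ≠ n})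

private theorem greedy_def (G : SimpleGraph V) (L : LinearOrder V) (k : ℕ) (v : V) :
    greedy G L k v = sInf {n | ∀ x, WeaklyAccessible G L k x v → greedy G L k x ≠ n} := by
  unfold greedy
  rw [WellFounded.fix_eq]
  congr 1
  ext n
  simp only [Set.mem_setOf_eq]
  constructor
  · intro h x hwa
    exact h x hwa.1 hwa
  · intro h x _ hwa
    exact h x hwa

private theorem greedy_ne (G : SimpleGraph V) (L : LinearOrder V) (k : ℕ) (v : V) :
    ∀ x, WeaklyAccessible G L k x v → greedy G L k x ≠ greedy G L k v := by
  have hmem : greedy G L k v ∈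
      {n | ∀ x, WeaklyAccessible G L k x v → greedy G L k x ≠ n} := by
    rw [greedy_def]
    apply Nat.sInf_mem
    have hfin : ((fun x => greedy G L k x) '' {x | WeaklyAccessible G L k x v}).Finite :=
      (Set.toFinite _).image _
    obtain ⟨n, hn⟩ := hfin.infinite_compl.nonempty
    exact ⟨n, fun x hwa hx => hn ⟨x, hwa, hx⟩⟩
  exact hmem

private theorem greedy_le (G : SimpleGraph V) (L : LinearOrder V) (k : ℕ) {s : ℕ}
    (hL : ∀ y : V, {x : V | WeaklyAccessible G L k x y}.ncard ≤ s) (v : V) :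
    greedy G L k v ≤ s := by
  rw [greedy_def]
  by_contra hgt
  push_neg at hgt
  have hsub : (↑(Finset.range (s + 1)) : Set ℕ) ⊆
      (fun x => greedy G L k x) '' {x | WeaklyAccessible G L k x v} := by
    intro n hn
    simp only [Finset.coe_range, Set.mem_Iio] at hn
    by_contra hnotin
    have hmem : n ∈ {n | ∀ x, WeaklyAccessible G L k x v → greedy G L k x ≠ n} :=
      fun x hwa hx => hnotin ⟨x, hwa, hx⟩
    have := Nat.sInf_le hmem
    omega
  have h1 : s + 1 ≤ ({x : V | WeaklyAccessible G L k x v}).ncard := by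
    calc s + 1 = (↑(Finset.range (s + 1)) : Set ℕ).ncard := by
          rw [Set.ncard_coe_finset, Finset.card_range]
      _ ≤ ((fun x => greedy G L k x) '' {x | WeaklyAccessible G L k x v}).ncard :=
          Set.ncard_le_ncard hsub (Set.toFinite _)
      _ ≤ ({x : V | WeaklyAccessible G L k x v}).ncard := Set.ncard_image_le (Set.toFinite _)
  have := hL v
  omega

omit [Fintype V] in
/-- The key lemma: if `dist u v = 2q+1` and `xu`, `xv` are the `L`-minima of the radius-`q`
balls around `u` and `v` respectively, with `xu <_L xv`, then `xu` is weakly `(4q+1)`-accessible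
from `xv`. -/
private theorem key_access (G : SimpleGraph V) (L : LinearOrder V) (q : ℕ) {u v xu xv : V}
    (hxu : ∃ w : G.Walk u xu, w.length ≤ q)
    (hxv : ∃ w : G.Walk v xv, w.length ≤ q)
    (hmu : ∀ z, (∃ w : G.Walk u z, w.length ≤ q) → L.le xu z)
    (hmv : ∀ z, (∃ w : G.Walk v z, w.length ≤ q) → L.le xv z)
    (hr : G.Reachable u v) (hd : G.dist u v = 2 * q + 1)
    (hlt : L.lt xu xv) :
    WeaklyAccessible G L (4 * q + 1) xu xv := by
  letI := L
  obtain ⟨P, hP⟩ := hr.exists_walk_length_eq_dist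
  rw [hd] at hP
  obtain ⟨wu, hwu⟩ := hxu
  obtain ⟨wv, hwv⟩ := hxv
  set W : G.Walk xu xv := wu.reverse.append (P.append wv) with hW
  have hWlen : W.length ≤ 4 * q + 1 := by
    simp only [hW, Walk.length_append, Walk.length_reverse]
    omega
  have hsup : ∀ z ∈ W.support, L.le xu z := by
    intro z hz
    rw [hW, Walk.mem_support_append_iff] at hz
    rcases hz with h1 | h2
    · rw [Walk.support_reverse, List.mem_reverse] at h1
      exact hmu z ⟨wu.takeUntil z h1, (Walk.length_takeUntil_le wu h1).trans hwu⟩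
    · rw [Walk.mem_support_append_iff] at h2
      rcases h2 with h3 | h4
      · have hsum : (P.takeUntil z h3).length + (P.dropUntil z h3).length = 2 * q + 1 := by
          have := congrArg Walk.length (P.take_spec h3)
          rwa [Walk.length_append, hP] at this
        by_cases hc : (P.takeUntil z h3).length ≤ q
        · exact hmu z ⟨P.takeUntil z h3, hc⟩
        · have hlen2 : ((P.dropUntil z h3).reverse).length ≤ q := by
            rw [Walk.length_reverse]; omega
          exact le_of_lt (lt_of_lt_of_le hlt (hmv z ⟨(P.dropUntil z h3).reverse, hlen2⟩))
      · exact le_of_lt (lt_of_lt_of_le hlt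
          (hmv z ⟨wv.takeUntil z h4, (Walk.length_takeUntil_le wv h4).trans hwv⟩))
  exact ⟨hlt, W.bypass, Walk.bypass_isPath W, (Walk.length_bypass_le W).trans hWlen,
    fun z hz hzx _ => lt_of_le_of_ne (hsup z (Walk.support_bypass_subset W hz)) (Ne.symm hzx)⟩

end Greedy

/-- Theorem 10(a): for odd positive `p` and any finite graph `G`,
`χ(G^[♮p]) ≤ wcol_{2p-1}(G)`. -/
theorem chromaticNumber_exactDistanceGraph_le_wcol_odd
    [Fintype V] (G : SimpleGraph V) (p : ℕ) (hp : Odd p) :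
    (exactDistanceGraph G p).chromaticNumber ≤ (wcol G (2 * p - 1) : ℕ∞) := by
  classical
  obtain ⟨q, hq⟩ := hp
  have hk : 2 * p - 1 = 4 * q + 1 := by omega
  have hSne : { m : ℕ | ∃ L : LinearOrder V, ∀ y : V,
      {x : V | WeaklyAccessible G L (2 * p - 1) x y}.ncard ≤ m }.Nonempty := by
    refine ⟨Fintype.card V,
      LinearOrder.lift' (Fintype.equivFin V) (Fintype.equivFin V).injective, fun y => ?_⟩
    calc {x : V | WeaklyAccessible G _ (2 * p - 1) x y}.ncard
        ≤ (Set.univ : Set V).ncard := Set.ncard_le_ncard (Set.subset_univ _) (Set.toFinite _)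
      _ = Fintype.card V := by rw [Set.ncard_univ, Nat.card_eq_fintype_card]
  set s := sInf { m : ℕ | ∃ L : LinearOrder V, ∀ y : V,
      {x : V | WeaklyAccessible G L (2 * p - 1) x y}.ncard ≤ m } with hs
  have hLmem := Nat.sInf_mem hSne
  rw [← hs] at hLmem
  obtain ⟨L, hL⟩ := hLmem
  letI := L
  have hball : ∀ v : V, ∃ x : V, (∃ w : G.Walk v x, w.length ≤ q) ∧
      ∀ z, (∃ w : G.Walk v z, w.length ≤ q) → L.le x z := by
    intro v
    have hne : (Finset.univ.filter (fun z => ∃ w : G.Walk v z, w.length ≤ q)).Nonempty := by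
      refine ⟨v, ?_⟩
      simp only [Finset.mem_filter, Finset.mem_univ, true_and]
      exact ⟨Walk.nil, by simp⟩
    obtain ⟨x, hx, hmin⟩ := Finset.exists_min_image _ id hne
    refine ⟨x, (Finset.mem_filter.mp hx).2, fun z hz => ?_⟩
    exact hmin z (Finset.mem_filter.mpr ⟨Finset.mem_univ _, hz⟩)
  choose xb hxb hxbmin using hball
  have hcol : (exactDistanceGraph G p).Colorable (s + 1) := by
    refine ⟨Coloring.mk (fun v => ⟨greedy G L (2 * p - 1) (xb v),
      Nat.lt_succ_of_le (greedy_le G L (2 * p - 1) hL _)⟩) ?_⟩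
    intro a b hab
    obtain ⟨hne', hreach, hdist⟩ := hab
    simp only [Ne, Fin.mk.injEq]
    have hxne : xb a ≠ xb b := by
      intro h
      obtain ⟨wa, hwa⟩ := hxb a
      obtain ⟨wb, hwb⟩ := hxb b
      have hwalk : G.dist a b ≤ (wa.append ((wb.copy rfl h.symm).reverse)).length :=
        SimpleGraph.dist_le _
      rw [Walk.length_append, Walk.length_reverse, Walk.length_copy, hdist] at hwalk
      omega
    have hda : G.dist a b = 2 * q + 1 := by rw [hdist]; omega
    have hdb : G.dist b a = 2 * q + 1 := by rw [SimpleGraph.dist_comm, hdist]; omega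
    intro hEq
    rcases lt_or_gt_of_ne hxne with hlt | hgt
    · have hacc := key_access G L q (hxb a) (hxb b) (hxbmin a) (hxbmin b) hreach hda hlt
      rw [← hk] at hacc
      exact greedy_ne G L (2 * p - 1) (xb b) (xb a) hacc hEq
    · have hacc := key_access G L q (hxb b) (hxb a) (hxbmin b) (hxbmin a) hreach.symm hdb hgt
      rw [← hk] at hacc
      exact greedy_ne G L (2 * p - 1) (xb a) (xb b) hacc hEq.symm
  refine hcol.chromaticNumber_le.trans ?_
  have hwcol : wcol G (2 * p - 1) = 1 + s := by
    unfold wcol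
    rw [← hs]
  rw [hwcol]
  exact_mod_cast Nat.le_of_eq (by omega)
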